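/- arXiv:0707.3986 — 11 statements merged into one kernel-verified Lean document; each statement's English description precedes it below -/
import Mathlib

section
/- Let f : D → G be any function with f(r) = 0. Then there exists a family of functions (f_A)_{A ⊆ S}, f_A : D → G, such that: (i) each f_A depends only on the coordinates in A, i.e. f_A(x) = f_A(g_A(x)) for all x ∈ D; (ii) f_A(x) = 0 whenever x_i = r_i for some i ∈ A; and (iii) f(x) = Σ_{A ⊆ S} f_A(x) for every x ∈ D. -/
/-- **Existence of the Hammersley–Clifford / Besag decomposition.**
Let `N` be a positive integer, `S = {1,…,N}`, `(D i)` a family of nonempty sets,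
`D = ∏ i, D i`, `G` an additive commutative group, and `r ∈ D` a reference point.
For `A ⊆ S` the grounding map sends `x` to the configuration equal to `x` on `A`
and to `r` off `A`.  If `f : D → G` satisfies `f r = 0`, then there is a family
`(f_A)_{A ⊆ S}` such that each `f_A` depends only on the coordinates in `A`,
`f_A` vanishes as soon as some coordinate indexed by `A` is grounded, and
`f = Σ_{A ⊆ S} f_A`. -/
theorem besag_decomposition_exists
    {N : ℕ} (hN : 0 < N) (D : Fin N → Type*) [∀ i, Nonempty (D i)]
    {G : Type*} [AddCommGroup G] (r : ∀ i, D i)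
    (f : (∀ i, D i) → G) (hf : f r = 0) :
    ∃ F : Finset (Fin N) → ((∀ i, D i) → G),
      (∀ (A : Finset (Fin N)) (x : ∀ i, D i),
          F A x = F A (fun i => if i ∈ A then x i else r i)) ∧
      (∀ (A : Finset (Fin N)) (x : ∀ i, D i),
          (∃ i ∈ A, x i = r i) → F A x = 0) ∧
      (∀ x : ∀ i, D i, f x = ∑ A : Finset (Fin N), F A x) := by
  classical
  set g : Finset (Fin N) → (∀ i, D i) → (∀ i, D i) :=
    fun B x i => if i ∈ B then x i else r i with hg
  refine ⟨fun A x => ∑ B ∈ A.powerset, ((-1 : ℤ) ^ (A \ B).card) • f (g B x),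
    ?_, ?_, ?_⟩
  · intro A x
    refine Finset.sum_congr rfl fun B hB => ?_
    rw [Finset.mem_powerset] at hB
    have : g B (fun i => if i ∈ A then x i else r i) = g B x := by
      funext i
      simp only [hg]
      by_cases h : i ∈ B
      · simp [h, hB h]
      · simp [h]
    rw [this]
  · rintro A x ⟨i, hiA, hxi⟩
    show (∑ B ∈ A.powerset, ((-1 : ℤ) ^ (A \ B).card) • f (g B x)) = 0
    have key : ∀ B : Finset (Fin N), g B x = g (insert i B) x := by
      intro B
      funext j
      simp only [hg, Finset.mem_insert]
      by_cases h : j = i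
      · subst h; by_cases hb : j ∈ B <;> simp [hb, hxi]
      · by_cases hb : j ∈ B <;> simp [h, hb]
    have hA : A = insert i (A.erase i) := (Finset.insert_erase hiA).symm
    rw [hA, Finset.sum_powerset_insert (Finset.notMem_erase i A)]
    rw [← Finset.sum_add_distrib]
    refine Finset.sum_eq_zero fun B hB => ?_
    rw [Finset.mem_powerset] at hB
    have hiB : i ∉ B := fun h => Finset.notMem_erase i A (hB h)
    have hcard : (insert i (A.erase i) \ B).card
        = (insert i (A.erase i) \ insert i B).card + 1 := by
      have h1 : insert i (A.erase i) \ insert i B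
          = (insert i (A.erase i) \ B).erase i := by
        ext j
        simp only [Finset.mem_sdiff, Finset.mem_insert, Finset.mem_erase]
        tauto
      have hi : i ∈ insert i (A.erase i) \ B := by
        simp [hiB]
      have hpos : 0 < (insert i (A.erase i) \ B).card :=
        Finset.card_pos.mpr ⟨i, hi⟩
      rw [h1, Finset.card_erase_of_mem hi]
      omega
    rw [← key B, hcard, pow_succ]
    simp [add_smul, neg_smul]
  · intro x
    have swap :
        (∑ A : Finset (Fin N), ∑ B ∈ A.powerset,
          ((-1 : ℤ) ^ (A \ B).card) • f (g B x))
        = ∑ B : Finset (Fin N), ∑ A ∈ Finset.univ.filter (fun A => B ⊆ A),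
            ((-1 : ℤ) ^ (A \ B).card) • f (g B x) := by
      refine Finset.sum_comm' ?_
      intro A B
      simp [Finset.mem_powerset]
    show f x = ∑ A : Finset (Fin N), ∑ B ∈ A.powerset,
          ((-1 : ℤ) ^ (A \ B).card) • f (g B x)
    rw [swap]
    have inner : ∀ B : Finset (Fin N),
        (∑ A ∈ Finset.univ.filter (fun A => B ⊆ A),
          ((-1 : ℤ) ^ (A \ B).card) • f (g B x))
        = (if B = Finset.univ then (1 : ℤ) else 0) • f (g B x) := by
      intro B
      have reindex :
          (∑ A ∈ Finset.univ.filter (fun A => B ⊆ A),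
            ((-1 : ℤ) ^ (A \ B).card) • f (g B x))
          = ∑ C ∈ (Finset.univ \ B).powerset,
              ((-1 : ℤ) ^ C.card) • f (g B x) := by
        refine Finset.sum_nbij' (fun A => A \ B) (fun C => B ∪ C) ?_ ?_ ?_ ?_ ?_
        · intro A hA
          simp only [Finset.mem_filter] at hA
          simp only [Finset.mem_powerset]
          exact Finset.sdiff_subset_sdiff (Finset.subset_univ A) le_rfl
        · intro C hC
          simp [Finset.subset_union_left]
        · intro A hA
          simp only [Finset.mem_filter] at hA
          exact Finset.union_sdiff_of_subset hA.2
        · intro C hC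
          rw [Finset.mem_powerset] at hC
          ext j
          simp only [Finset.mem_sdiff, Finset.mem_union]
          constructor
          · tauto
          · intro hj
            have := hC hj
            simp only [Finset.mem_sdiff] at this
            tauto
        · intro A hA; rfl
      rw [reindex, ← Finset.sum_smul, Finset.sum_powerset_neg_one_pow_card]
      congr 1
      by_cases h : B = Finset.univ
      · simp [h]
      · rw [if_neg h, if_neg]
        intro he
        exact h (Finset.univ_subset_iff.mp
          (Finset.sdiff_eq_empty_iff_subset.mp he))
    rw [Finset.sum_congr rfl fun B _ => inner B]
    simp only [ite_smul, one_smul, zero_smul, Finset.sum_ite_eq',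
      Finset.mem_univ, if_true]
    have : g Finset.univ x = x := by
      funext i; simp [hg]
    rw [this]
end

section
/- Let f : D → G with f(r) = 0, and let (f_A)_{A ⊆ S} and (f'_A)_{A ⊆ S} be two families of functions D → G such that each f_A and each f'_A depends only on the coordinates in A, vanishes whenever some coordinate x_i with i ∈ A equals r_i, and f(x) = Σ_{A ⊆ S} f_A(x) = Σ_{A ⊆ S} f'_A(x) for all x ∈ D. Then f_A = f'_A for every A ⊆ S. -/
private lemma besag_powerset_sum
    {N : ℕ} {D : Fin N → Type*}
    {G : Type*} [AddCommGroup G] (r : ∀ i, D i)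
    (f : (∀ i, D i) → G)
    (F : Finset (Fin N) → ((∀ i, D i) → G))
    (hF1 : ∀ (A : Finset (Fin N)) (x : ∀ i, D i),
        F A x = F A (fun i => if i ∈ A then x i else r i))
    (hF2 : ∀ (A : Finset (Fin N)) (x : ∀ i, D i),
        (∃ i ∈ A, x i = r i) → F A x = 0)
    (hF3 : ∀ x : ∀ i, D i, f x = ∑ A : Finset (Fin N), F A x)
    (A : Finset (Fin N)) (x : ∀ i, D i) :
    ∑ B ∈ A.powerset, F B x = f (fun i => if i ∈ A then x i else r i) := by
  set y : ∀ i, D i := fun i => if i ∈ A then x i else r i with hy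
  rw [hF3 y]
  rw [← Finset.sum_subset (Finset.subset_univ A.powerset)]
  · apply Finset.sum_congr rfl
    intro B hB
    rw [Finset.mem_powerset] at hB
    rw [hF1 B x, hF1 B y]
    congr 1
    funext i
    by_cases hi : i ∈ B
    · simp [hi, hy, hB hi]
    · simp [hi]
  · intro B _ hB
    rw [Finset.mem_powerset] at hB
    obtain ⟨i, hiB, hiA⟩ := Finset.not_subset.mp hB
    exact hF2 B y ⟨i, hiB, by simp [hy, hiA]⟩

/-- **Uniqueness of the Hammersley–Clifford / Besag decomposition.**
Given `f : D → G` with `f r = 0`, and two families `(F A)` and `(F' A)` of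
functions `D → G`, each depending only on the coordinates in `A`, vanishing
whenever some coordinate indexed by `A` is grounded, and both summing to `f`,
the two families coincide. -/
theorem besag_decomposition_unique
    {N : ℕ} (hN : 0 < N) (D : Fin N → Type*) [∀ i, Nonempty (D i)]
    {G : Type*} [AddCommGroup G] (r : ∀ i, D i)
    (f : (∀ i, D i) → G) (hf : f r = 0)
    (F F' : Finset (Fin N) → ((∀ i, D i) → G))
    (hF1 : ∀ (A : Finset (Fin N)) (x : ∀ i, D i),
        F A x = F A (fun i => if i ∈ A then x i else r i))
    (hF2 : ∀ (A : Finset (Fin N)) (x : ∀ i, D i),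
        (∃ i ∈ A, x i = r i) → F A x = 0)
    (hF3 : ∀ x : ∀ i, D i, f x = ∑ A : Finset (Fin N), F A x)
    (hF'1 : ∀ (A : Finset (Fin N)) (x : ∀ i, D i),
        F' A x = F' A (fun i => if i ∈ A then x i else r i))
    (hF'2 : ∀ (A : Finset (Fin N)) (x : ∀ i, D i),
        (∃ i ∈ A, x i = r i) → F' A x = 0)
    (hF'3 : ∀ x : ∀ i, D i, f x = ∑ A : Finset (Fin N), F' A x) :
    ∀ A : Finset (Fin N), F A = F' A := by
  intro A
  induction A using Finset.strongInduction with
  | _ A ih =>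
    funext x
    have key : ∑ B ∈ A.powerset, F B x = ∑ B ∈ A.powerset, F' B x := by
      rw [besag_powerset_sum r f F hF1 hF2 hF3 A x,
          besag_powerset_sum r f F' hF'1 hF'2 hF'3 A x]
    rw [← Finset.add_sum_erase _ _ (Finset.mem_powerset_self A),
        ← Finset.add_sum_erase _ _ (Finset.mem_powerset_self A)] at key
    have hrest : ∑ B ∈ A.powerset.erase A, F B x
        = ∑ B ∈ A.powerset.erase A, F' B x := by
      apply Finset.sum_congr rfl
      intro B hB
      obtain ⟨hne, hsub⟩ := Finset.mem_erase.mp hB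
      rw [ih B (Finset.ssubset_iff_subset_ne.mpr ⟨Finset.mem_powerset.mp hsub, hne⟩)]
    rw [hrest] at key
    exact add_right_cancel key
end

section
/- Let p : D → ℝ satisfy p(x) > 0 for all x ∈ D. Then there exists a unique family of functions (Q_A)_{A ⊆ S}, Q_A : D → ℝ, such that each Q_A depends only on the coordinates in A, Q_A(x) = 0 whenever x_i = r_i for some i ∈ A, and log(p(x)/p(r)) = Σ_{A ⊆ S} Q_A(x) for every x ∈ D. -/
open Finset

section Aux

variable {N : ℕ} {D : Fin N → Type*}

/-- grounding map -/
private def gr (r : ∀ i, D i) (A : Finset (Fin N)) (x : ∀ i, D i) : ∀ i, D i :=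
  fun i => if i ∈ A then x i else r i

private lemma gr_gr (r : ∀ i, D i) (A B : Finset (Fin N)) (x : ∀ i, D i) :
    gr r B (gr r A x) = gr r (A ∩ B) x := by
  funext i
  simp only [gr, mem_inter]
  by_cases hB : i ∈ B <;> by_cases hA : i ∈ A <;> simp [hA, hB]

private lemma gr_univ (r x : ∀ i, D i) : gr r univ x = x := by
  funext i; simp [gr]

/-- Sum of signs over supersets. -/
private lemma sum_superset_sign (B : Finset (Fin N)) :
    ∑ A ∈ univ.filter (fun A => B ⊆ A), (-1 : ℝ) ^ (A.card - B.card)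
      = if B = (univ : Finset (Fin N)) then 1 else 0 := by
  have h : ∑ A ∈ univ.filter (fun A => B ⊆ A), (-1 : ℝ) ^ (A.card - B.card)
      = ∑ C ∈ Bᶜ.powerset, (-1 : ℝ) ^ C.card := by
    refine Finset.sum_nbij' (fun A => A \ B) (fun C => B ∪ C) ?_ ?_ ?_ ?_ ?_
    · intro A hA
      simp only [mem_filter, mem_univ, true_and] at hA
      simp only [mem_powerset]
      intro i hi
      simp only [mem_sdiff] at hi
      simp [mem_compl, hi.2]
    · intro C hC
      simp only [mem_powerset] at hC
      simp only [mem_filter, mem_univ, true_and]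
      exact subset_union_left
    · intro A hA
      simp only [mem_filter, mem_univ, true_and] at hA
      show B ∪ (A \ B) = A
      exact union_sdiff_of_subset hA
    · intro C hC
      simp only [mem_powerset] at hC
      have hd : Disjoint B C := by
        rw [Finset.disjoint_left]
        intro i hiB hiC
        exact (mem_compl.mp (hC hiC)) hiB
      show (B ∪ C) \ B = C
      rw [union_sdiff_cancel_left hd]
    · intro A hA
      simp only [mem_filter, mem_univ, true_and] at hA
      congr 1
      rw [card_sdiff_of_subset hA]
  rw [h]
  have hz := Finset.sum_powerset_neg_one_pow_card (x := Bᶜ)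
  have hcast : ∑ C ∈ Bᶜ.powerset, (-1 : ℝ) ^ C.card
      = ((∑ C ∈ Bᶜ.powerset, (-1 : ℤ) ^ C.card : ℤ) : ℝ) := by push_cast; ring_nf
  rw [hcast, hz]
  by_cases hB : B = univ
  · simp [hB]
  · have hne : Bᶜ ≠ ∅ := by
      simp only [ne_eq, compl_eq_empty_iff]
      exact hB
    simp [hne, hB]

end Aux

/-- **Hammersley–Clifford theorem (existence and uniqueness of the potentials).**
For a strictly positive function `p : D → ℝ` there exists a unique family of
potentials `(Q A)` such that each `Q A` depends only on the coordinates in `A`,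
`Q A x = 0` whenever some coordinate `x i` with `i ∈ A` equals `r i`, and
`log (p x / p r) = Σ_{A ⊆ S} Q A x` for every `x`. -/
theorem hammersley_clifford_potentials
    {N : ℕ} (hN : 0 < N) (D : Fin N → Type*) [∀ i, Nonempty (D i)]
    (r : ∀ i, D i) (p : (∀ i, D i) → ℝ) (hp : ∀ x, 0 < p x) :
    ∃! Q : Finset (Fin N) → ((∀ i, D i) → ℝ),
      (∀ (A : Finset (Fin N)) (x : ∀ i, D i),
          Q A x = Q A (fun i => if i ∈ A then x i else r i)) ∧
      (∀ (A : Finset (Fin N)) (x : ∀ i, D i),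
          (∃ i ∈ A, x i = r i) → Q A x = 0) ∧
      (∀ x : ∀ i, D i,
          Real.log (p x / p r) = ∑ A : Finset (Fin N), Q A x) := by
  classical
  set f : (∀ i, D i) → ℝ := fun x => Real.log (p x / p r) with hf
  have hgr : ∀ (A : Finset (Fin N)) (x : ∀ i, D i),
      (fun i => if i ∈ A then x i else r i) = gr r A x := fun A x => rfl
  set cand : Finset (Fin N) → ((∀ i, D i) → ℝ) :=
    fun A x => ∑ B ∈ A.powerset, (-1 : ℝ) ^ (A.card - B.card) * f (gr r B x) with hcand
  -- property 1 : depends only on coordinates in A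
  have prop1 : ∀ (A : Finset (Fin N)) (x : ∀ i, D i),
      cand A x = cand A (fun i => if i ∈ A then x i else r i) := by
    intro A x
    rw [hgr, hcand]
    refine Finset.sum_congr rfl fun B hB => ?_
    rw [mem_powerset] at hB
    rw [gr_gr, inter_eq_right.mpr hB]
  -- property 2 : vanishes when a coordinate of A is grounded
  have prop2 : ∀ (A : Finset (Fin N)) (x : ∀ i, D i),
      (∃ i ∈ A, x i = r i) → cand A x = 0 := by
    rintro A x ⟨i, hiA, hxi⟩
    have hA : A = insert i (A.erase i) := (insert_erase hiA).symm
    show ∑ B ∈ A.powerset, (-1 : ℝ) ^ (A.card - B.card) * f (gr r B x) = 0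
    rw [hA, Finset.sum_powerset_insert (notMem_erase i A)]
    have hcard : (insert i (A.erase i)).card = (A.erase i).card + 1 :=
      card_insert_of_notMem (notMem_erase i A)
    have key : ∀ B ∈ (A.erase i).powerset,
        (-1 : ℝ) ^ ((insert i (A.erase i)).card - (insert i B).card) * f (gr r (insert i B) x)
          = -((-1 : ℝ) ^ ((insert i (A.erase i)).card - B.card) * f (gr r B x)) := by
      intro B hB
      rw [mem_powerset] at hB
      have hiB : i ∉ B := fun h => notMem_erase i A (hB h)
      have hgrB : gr r (insert i B) x = gr r B x := by
        funext j
        simp only [gr, mem_insert]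
        by_cases hj : j ∈ B
        · simp [hj]
        · by_cases hji : j = i
          · subst hji; simp [hj, hxi]
          · simp [hj, hji]
      rw [hgrB, card_insert_of_notMem hiB, hcard]
      have hBle : B.card ≤ (A.erase i).card := card_le_card hB
      have h1 : (A.erase i).card + 1 - (B.card + 1) = (A.erase i).card - B.card := by omega
      have h2 : (A.erase i).card + 1 - B.card = ((A.erase i).card - B.card) + 1 := by omega
      rw [h1, h2, pow_succ]
      ring
    rw [Finset.sum_congr rfl key, Finset.sum_neg_distrib]
    ring
  -- property 3 : the sum identity
  have prop3 : ∀ x : ∀ i, D i,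
      Real.log (p x / p r) = ∑ A : Finset (Fin N), cand A x := by
    intro x
    have swap : ∑ A : Finset (Fin N), ∑ B ∈ A.powerset,
          (-1 : ℝ) ^ (A.card - B.card) * f (gr r B x)
        = ∑ B : Finset (Fin N), ∑ A ∈ univ.filter (fun A => B ⊆ A),
          (-1 : ℝ) ^ (A.card - B.card) * f (gr r B x) := by
      refine Finset.sum_comm' ?_
      intro A B
      simp [mem_powerset]
    show f x = _
    rw [hcand]
    rw [swap]
    have inner : ∀ B : Finset (Fin N),
        ∑ A ∈ univ.filter (fun A => B ⊆ A), (-1 : ℝ) ^ (A.card - B.card) * f (gr r B x)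
          = (if B = (univ : Finset (Fin N)) then 1 else 0) * f (gr r B x) := by
      intro B
      rw [← Finset.sum_mul, sum_superset_sign]
    rw [Finset.sum_congr rfl fun B _ => inner B]
    simp only [ite_mul, one_mul, zero_mul]
    rw [Finset.sum_ite_eq' univ univ (fun B => f (gr r B x))]
    simp [gr_univ]
  -- partial sums are determined for any family satisfying the conditions
  have key : ∀ Q : Finset (Fin N) → ((∀ i, D i) → ℝ),
      (∀ (A : Finset (Fin N)) (x : ∀ i, D i),
          Q A x = Q A (fun i => if i ∈ A then x i else r i)) →
      (∀ (A : Finset (Fin N)) (x : ∀ i, D i),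
          (∃ i ∈ A, x i = r i) → Q A x = 0) →
      (∀ x : ∀ i, D i, Real.log (p x / p r) = ∑ A : Finset (Fin N), Q A x) →
      ∀ (A : Finset (Fin N)) (x : ∀ i, D i),
        ∑ B ∈ A.powerset, Q B x = f (gr r A x) := by
    intro Q hQ1 hQ2 hQ3 A x
    have h3 : f (gr r A x) = ∑ B : Finset (Fin N), Q B (gr r A x) := hQ3 (gr r A x)
    rw [h3]
    rw [← Finset.sum_subset (subset_univ A.powerset) ?_]
    · refine Finset.sum_congr rfl fun B hB => ?_
      rw [mem_powerset] at hB
      rw [hQ1 B (gr r A x), hgr, gr_gr, inter_eq_right.mpr hB, ← hgr, ← hQ1]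
    · intro B _ hB
      rw [mem_powerset] at hB
      obtain ⟨i, hiB, hiA⟩ := not_subset.mp hB
      refine hQ2 B (gr r A x) ⟨i, hiB, ?_⟩
      simp [gr, hiA]
  refine ⟨cand, ⟨prop1, prop2, prop3⟩, ?_⟩
  intro Q hQ
  obtain ⟨hQ1, hQ2, hQ3⟩ := hQ
  funext A
  induction A using Finset.strongInduction with
  | _ A ih =>
    funext x
    have e1 := key Q hQ1 hQ2 hQ3 A x
    have e2 := key cand prop1 prop2 prop3 A x
    rw [← e2] at e1
    have hA : A ∈ A.powerset := mem_powerset_self A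
    rw [← Finset.add_sum_erase _ _ hA, ← Finset.add_sum_erase _ _ hA] at e1
    have hsum : ∑ B ∈ A.powerset.erase A, Q B x = ∑ B ∈ A.powerset.erase A, cand B x := by
      refine Finset.sum_congr rfl fun B hB => ?_
      rw [mem_erase, mem_powerset] at hB
      rw [ih B (lt_of_le_of_ne hB.2 hB.1)]
    rw [hsum] at e1
    linarith
end

section
/- Let p : D → ℝ satisfy p(x) > 0 for all x ∈ D, and let (Q_A)_{A ⊆ S} be the unique family of functions such that each Q_A depends only on the coordinates in A, vanishes whenever some coordinate x_i with i ∈ A equals r_i, and log(p(x)/p(r)) = Σ_{A ⊆ S} Q_A(x) for all x. Then for every site i ∈ S and every x ∈ D, log( p(x) / p(g_{S∖{i}}(x)) ) = Σ_{A ⊆ S, i ∈ A} Q_A(x), where g_{S∖{i}}(x) is the configuration obtained from x by replacing its i-th coordinate by r_i. -/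
/-- **Hammersley–Clifford theorem: conditional log-ratio at a site.**
If `(Q A)` is the family of potentials of a strictly positive `p : D → ℝ`
(each `Q A` depending only on the coordinates in `A`, vanishing when a
coordinate indexed by `A` is grounded, and summing to `log (p x / p r)`),
then for every site `i` and configuration `x`,
`log (p x / p (g_{S∖{i}} x)) = Σ_{A ∋ i} Q A x`,
where `g_{S∖{i}} x` replaces the `i`-th coordinate of `x` by `r i`. -/
theorem hammersley_clifford_conditional
    {N : ℕ} (hN : 0 < N) (D : Fin N → Type*) [∀ i, Nonempty (D i)]
    (r : ∀ i, D i) (p : (∀ i, D i) → ℝ) (hp : ∀ x, 0 < p x)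
    (Q : Finset (Fin N) → ((∀ i, D i) → ℝ))
    (hQ1 : ∀ (A : Finset (Fin N)) (x : ∀ i, D i),
        Q A x = Q A (fun i => if i ∈ A then x i else r i))
    (hQ2 : ∀ (A : Finset (Fin N)) (x : ∀ i, D i),
        (∃ i ∈ A, x i = r i) → Q A x = 0)
    (hQ3 : ∀ x : ∀ i, D i,
        Real.log (p x / p r) = ∑ A : Finset (Fin N), Q A x) :
    ∀ (i : Fin N) (x : ∀ j, D j),
      Real.log (p x / p (Function.update x i (r i))) =
        ∑ A ∈ Finset.univ.filter (fun A : Finset (Fin N) => i ∈ A), Q A x := by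
  intro i x
  set y := Function.update x i (r i) with hy
  have hlog : Real.log (p x / p y) =
      Real.log (p x / p r) - Real.log (p y / p r) := by
    rw [Real.log_div (hp x).ne' (hp y).ne', Real.log_div (hp x).ne' (hp r).ne',
      Real.log_div (hp y).ne' (hp r).ne']
    ring
  rw [hlog, hQ3 x, hQ3 y]
  have hsplit : ∀ z : (∀ j, D j),
      ∑ A : Finset (Fin N), Q A z =
        (∑ A ∈ Finset.univ.filter (fun A : Finset (Fin N) => i ∈ A), Q A z) +
        ∑ A ∈ Finset.univ.filter (fun A : Finset (Fin N) => i ∉ A), Q A z := by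
    intro z
    exact (Finset.sum_filter_add_sum_filter_not Finset.univ _ _).symm
  rw [hsplit x, hsplit y]
  have h1 : ∀ A ∈ Finset.univ.filter (fun A : Finset (Fin N) => i ∈ A),
      Q A y = 0 := by
    intro A hA
    refine hQ2 A y ⟨i, (Finset.mem_filter.mp hA).2, ?_⟩
    simp [hy]
  have h2 : ∀ A ∈ Finset.univ.filter (fun A : Finset (Fin N) => i ∉ A),
      Q A y = Q A x := by
    intro A hA
    have hiA : i ∉ A := (Finset.mem_filter.mp hA).2
    rw [hQ1 A y, hQ1 A x]
    congr 1
    funext j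
    by_cases hj : j ∈ A
    · have : j ≠ i := fun h => hiA (h ▸ hj)
      simp [hj, hy, Function.update_of_ne this]
    · simp [hj]
  rw [Finset.sum_eq_zero h1, Finset.sum_congr rfl h2]
  ring
end

section
/- The mixed-states induced measure μ has Radon–Nikodym density with respect to m given by the mixed-states probability density p^m(x) = ρ · Σ_l π_l · 1_{{ξ_l}}(x) + (1−ρ) · (1 − 1_A(x)) · p(x), where A = {ξ_l : l ∈ ℕ}; that is, μ = m.withDensity p^m, i.e. μ(B) = ∫_B p^m dm for every Borel set B ⊆ ℝ. -/
open MeasureTheory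
open scoped ENNReal NNReal

lemma withDensity_dirac_aux {a : ℝ} (f : ℝ → ℝ≥0∞) :
    (Measure.dirac a).withDensity f = f a • Measure.dirac a := by
  ext s hs
  classical
  rw [withDensity_apply _ hs, setLIntegral_dirac f s, Measure.smul_apply,
    Measure.dirac_apply' _ hs, smul_eq_mul]
  by_cases h : a ∈ s <;> simp [h]

/-- **Radon–Nikodym density of the mixed-states induced measure.** -/
theorem mixedStates_radonNikodym
    (ξ : ℕ → ℝ) (hξ : Function.Injective ξ)
    (π : ℕ → ℝ≥0) (hπ : ∑' l, π l = 1)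
    (ρ : ℝ≥0) (hρ : ρ ≤ 1)
    (p : ℝ → ℝ≥0) (hp : Measurable p) (hp1 : ∫⁻ x, (p x : ℝ≥0∞) = 1)
    (μ m : Measure ℝ)
    (hμ : μ = ρ • Measure.sum (fun l : ℕ => π l • Measure.dirac (ξ l)) +
        (1 - ρ) • volume.withDensity (fun x => (p x : ℝ≥0∞)))
    (hm : m = Measure.sum (fun l : ℕ => Measure.dirac (ξ l)) + volume)
    (pm : ℝ → ℝ≥0∞)
    (hpm : ∀ x, pm x =
        (ρ : ℝ≥0∞) * ∑' l, (π l : ℝ≥0∞) * Set.indicator {ξ l} (fun _ => 1) x +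
        (1 - (ρ : ℝ≥0∞)) * (1 - Set.indicator (Set.range ξ) (fun _ => 1) x) *
          (p x : ℝ≥0∞)) :
    μ = m.withDensity pm := by
  classical
  have hpmξ : ∀ l, pm (ξ l) = (ρ : ℝ≥0∞) * π l := by
    intro l
    rw [hpm]
    have h1 : ∑' j, (π j : ℝ≥0∞) * Set.indicator {ξ j} (fun _ => 1) (ξ l) = π l := by
      rw [tsum_eq_single l]
      · simp [Set.indicator_of_mem]
      · intro j hj
        have : ξ l ∉ ({ξ j} : Set ℝ) := by
          simp only [Set.mem_singleton_iff]
          exact fun h => hj (hξ h.symm)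
        simp [Set.indicator_of_notMem this]
    have h2 : Set.indicator (Set.range ξ) (fun _ => (1:ℝ≥0∞)) (ξ l) = 1 :=
      Set.indicator_of_mem (Set.mem_range_self l) _
    rw [h1, h2]
    simp
  have hpm_off : ∀ x, x ∉ Set.range ξ → pm x = (1 - (ρ : ℝ≥0∞)) * p x := by
    intro x hx
    rw [hpm]
    have h1 : ∀ j, (π j : ℝ≥0∞) * Set.indicator {ξ j} (fun _ => 1) x = 0 := by
      intro j
      have : x ∉ ({ξ j} : Set ℝ) := fun h => hx ⟨j, h.symm⟩
      simp [Set.indicator_of_notMem this]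
    have h2 : Set.indicator (Set.range ξ) (fun _ => (1:ℝ≥0∞)) x = 0 :=
      Set.indicator_of_notMem hx _
    simp only [h1, h2]
    simp
  rw [hμ, hm, withDensity_add_measure, withDensity_sum]
  congr 1
  · -- discrete part
    ext s hs
    simp only [Measure.smul_apply, Measure.sum_apply _ hs, smul_eq_mul,
      withDensity_dirac_aux, hpmξ, ENNReal.smul_def, ENNReal.tsum_mul_left]
    rw [← ENNReal.tsum_mul_left]
    exact tsum_congr fun i => (mul_assoc _ _ _).symm
  · -- continuous part
    have hnull : volume (Set.range ξ) = 0 :=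
      (Set.countable_range ξ).measure_zero _
    have hae : pm =ᵐ[volume] (1 - (ρ : ℝ≥0∞)) • fun x => (p x : ℝ≥0∞) := by
      refine (measure_mono_null ?_ hnull :
        volume {x | ¬ pm x = ((1 - (ρ:ℝ≥0∞)) • fun x => (p x : ℝ≥0∞)) x} = 0)
      intro x hx
      by_contra hxr
      exact hx (hpm_off x hxr)
    rw [withDensity_congr_ae hae,
      withDensity_smul _ (by exact measurable_coe_nnreal_ennreal.comp hp)]
    ext s hs
    simp only [Measure.smul_apply, smul_eq_mul, ENNReal.smul_def, ENNReal.coe_sub,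
      ENNReal.coe_one]
end

section
/- Let D_i, D_j, D_k be sets with distinguished elements r_i, r_j, r_k, each set containing an element distinct from its distinguished element. Let G_i : D_j × D_k → ℝ, G_j : D_i × D_k → ℝ, G_k : D_i × D_j → ℝ satisfy 1*_{r_i}(x_i) · G_i(x_j, x_k) = 1*_{r_j}(x_j) · G_j(x_i, x_k) = 1*_{r_k}(x_k) · G_k(x_i, x_j) for all x_i ∈ D_i, x_j ∈ D_j, x_k ∈ D_k. Then there exists a single constant χ ∈ ℝ such that G_i(x_j, x_k) = χ · 1*_{r_j}(x_j) · 1*_{r_k}(x_k), G_j(x_i, x_k) = χ · 1*_{r_i}(x_i) · 1*_{r_k}(x_k), and G_k(x_i, x_j) = χ · 1*_{r_i}(x_i) · 1*_{r_j}(x_j), for all arguments. -/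
open scoped Classical in
/-- The grounded indicator `1*_r : D → ℝ`: `0` at the reference value `r`
and `1` elsewhere. -/
noncomputable def groundedIndicator {D : Type*} (r x : D) : ℝ :=
  if x = r then 0 else 1

/-- **Third-order clique factorization.**
If `1*_{r_i}(x_i) · G_i(x_j,x_k) = 1*_{r_j}(x_j) · G_j(x_i,x_k)
 = 1*_{r_k}(x_k) · G_k(x_i,x_j)` for all arguments, and each set contains an
element distinct from its distinguished element, then there is a single
constant `χ` such that each `G` is `χ` times the product of the grounded
indicators of its two arguments. -/
theorem thirdOrder_clique_factorization
    {Di Dj Dk : Type*} (ri : Di) (rj : Dj) (rk : Dk)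
    (hDi : ∃ xi : Di, xi ≠ ri) (hDj : ∃ xj : Dj, xj ≠ rj)
    (hDk : ∃ xk : Dk, xk ≠ rk)
    (Gi : Dj → Dk → ℝ) (Gj : Di → Dk → ℝ) (Gk : Di → Dj → ℝ)
    (h1 : ∀ (xi : Di) (xj : Dj) (xk : Dk),
        groundedIndicator ri xi * Gi xj xk =
          groundedIndicator rj xj * Gj xi xk)
    (h2 : ∀ (xi : Di) (xj : Dj) (xk : Dk),
        groundedIndicator rj xj * Gj xi xk =
          groundedIndicator rk xk * Gk xi xj) :
    ∃ χ : ℝ,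
      (∀ (xj : Dj) (xk : Dk),
        Gi xj xk = χ * (groundedIndicator rj xj * groundedIndicator rk xk)) ∧
      (∀ (xi : Di) (xk : Dk),
        Gj xi xk = χ * (groundedIndicator ri xi * groundedIndicator rk xk)) ∧
      (∀ (xi : Di) (xj : Dj),
        Gk xi xj = χ * (groundedIndicator ri xi * groundedIndicator rj xj)) := by
  obtain ⟨ai, hai⟩ := hDi
  obtain ⟨aj, haj⟩ := hDj
  obtain ⟨ak, hak⟩ := hDk
  have indi : groundedIndicator ri ai = 1 := by simp [groundedIndicator, hai]
  have indj : groundedIndicator rj aj = 1 := by simp [groundedIndicator, haj]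
  have indk : groundedIndicator rk ak = 1 := by simp [groundedIndicator, hak]
  refine ⟨Gi aj ak, ?_, ?_, ?_⟩
  · intro xj xk
    have e1 := h1 ai xj xk
    rw [indi, one_mul] at e1
    have e2 := h2 ai aj xk
    rw [indj, one_mul] at e2
    have e3 := h1 ai aj ak
    rw [indi, indj, one_mul, one_mul] at e3
    have e4 := h2 ai aj ak
    rw [indj, indk, one_mul, one_mul] at e4
    rw [e1, e2, ← e4, ← e3]
    ring
  · intro xi xk
    have e1 := h2 xi aj xk
    rw [indj, one_mul] at e1
    have e2 := h1 xi aj ak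
    rw [indj, one_mul] at e2
    have e3 := h2 xi aj ak
    rw [indj, indk, one_mul, one_mul] at e3
    rw [e1, ← e3, ← e2]
    ring
  · intro xi xj
    have e1 := h2 xi xj ak
    rw [indk, one_mul] at e1
    have e2 := h1 xi aj ak
    rw [indj, one_mul] at e2
    rw [← e1, ← e2]
    ring
end

section
/- Let p, q : D → ℝ be strictly positive functions. Assume that for each i ∈ S there is a function g_i : D → ℝ that depends only on the coordinates in S∖{i} (i.e. g_i(x) = g_i(y) whenever x and y agree on all coordinates except possibly the i-th), such that for every x ∈ D: log( p(x) / p(g_{S∖{i}}(x)) ) = 1*_{r_i}(x_i) · g_i(x) + log( q(x) / q(g_{S∖{i}}(x)) ). Assume also that each D_i contains an element distinct from r_i. Then there exists a family of real constants (c_A) indexed by the nonempty subsets A ⊆ S such that for every x ∈ D: log( p(x)/p(r) ) = Σ_{∅ ≠ A ⊆ S} c_A · ∏_{i∈A} 1*_{r_i}(x_i) + log( q(x)/q(r) ). -/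
noncomputable def mobiusFix {α : Type*} [DecidableEq α] (φ : Finset α → ℝ) (A : Finset α) : ℝ :=
  φ A - ∑ B ∈ (A.powerset.erase A).attach, mobiusFix φ B.1
termination_by A.card
decreasing_by
  have hB := B.2
  rw [Finset.mem_erase, Finset.mem_powerset] at hB
  exact Finset.card_lt_card (Finset.ssubset_iff_subset_ne.mpr ⟨hB.2, hB.1⟩)

lemma mobiusFix_sum {α : Type*} [DecidableEq α] (φ : Finset α → ℝ) (T : Finset α) :
    ∑ B ∈ T.powerset, mobiusFix φ B = φ T := by
  have h : mobiusFix φ T = φ T - ∑ B ∈ T.powerset.erase T, mobiusFix φ B := by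
    rw [mobiusFix, Finset.sum_attach]
  rw [← Finset.add_sum_erase _ _ (Finset.mem_powerset_self T), h]
  ring



/-- **Decomposition theorem for mixed-states Markov random fields (energy form).**
Let `p, q : D → ℝ` be strictly positive.  Suppose that for each site `i` there
is a function `g i : D → ℝ` not depending on the `i`-th coordinate such that
`log (p x / p (x[i ↦ r i])) = 1*_{r i}(x i) · g i x + log (q x / q (x[i ↦ r i]))`
for all `x`, and that each `D i` contains an element distinct from `r i`.
Then there exist real constants `(c A)` indexed by the nonempty subsets
`A ⊆ S` such that for all `x`:
`log (p x / p r) = Σ_{∅ ≠ A ⊆ S} c A · Π_{i ∈ A} 1*_{r i}(x i) + log (q x / q r)`. -/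
theorem mixedStates_MRF_energy_decomposition
    {N : ℕ} (hN : 0 < N) (D : Fin N → Type*) [∀ i, Nonempty (D i)]
    (r : ∀ i, D i) (hr : ∀ i, ∃ y : D i, y ≠ r i)
    (p q : (∀ i, D i) → ℝ) (hp : ∀ x, 0 < p x) (hq : ∀ x, 0 < q x)
    (g : ∀ _ : Fin N, (∀ j, D j) → ℝ)
    (hg : ∀ (i : Fin N) (x : ∀ j, D j) (t : D i),
        g i (Function.update x i t) = g i x)
    (hpq : ∀ (i : Fin N) (x : ∀ j, D j),
        Real.log (p x / p (Function.update x i (r i))) =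
          groundedIndicator (r i) (x i) * g i x +
          Real.log (q x / q (Function.update x i (r i)))) :
    ∃ c : Finset (Fin N) → ℝ, ∀ x : ∀ j, D j,
      Real.log (p x / p r) =
        (∑ A ∈ Finset.univ.filter (fun A : Finset (Fin N) => A.Nonempty),
          c A * ∏ i ∈ A, groundedIndicator (r i) (x i)) +
        Real.log (q x / q r) := by
  classical
  -- F is the "log ratio" energy
  set F : (∀ i, D i) → ℝ := fun x => Real.log (p x) - Real.log (q x) with hFdef
  have hF : ∀ (i : Fin N) (x : ∀ j, D j),
      F x - F (Function.update x i (r i)) = groundedIndicator (r i) (x i) * g i x := by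
    intro i x
    have h := hpq i x
    rw [Real.log_div (hp x).ne' (hp _).ne', Real.log_div (hq x).ne' (hq _).ne'] at h
    simp only [hFdef]
    linarith
  choose y hy using hr
  -- Lemma A: F is unchanged when moving a non-reference coordinate to another non-ref value
  have lemA : ∀ (i : Fin N) (x : ∀ j, D j) (t : D i), t ≠ r i → x i ≠ r i →
      F (Function.update x i t) = F x := by
    intro i x t ht hx
    have h1 := hF i (Function.update x i t)
    have h2 := hF i x
    rw [Function.update_idem, Function.update_self] at h1
    rw [hg i x t] at h1
    rw [groundedIndicator] at h1 h2
    rw [if_neg ht] at h1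
    rw [if_neg hx] at h2
    linarith
  -- canonicalization over a set of coordinates
  have key : ∀ (s : Finset (Fin N)) (x : ∀ j, D j),
      F (fun j => if j ∈ s then (if x j = r j then r j else y j) else x j) = F x := by
    intro s
    induction s using Finset.induction_on with
    | empty => intro x; congr 1
    | @insert a s ha ih =>
      intro x
      set x' : ∀ j, D j := fun j => if j ∈ s then (if x j = r j then r j else y j) else x j
        with hx'
      have hupd : (fun j => if j ∈ insert a s then (if x j = r j then r j else y j) else x j)
          = Function.update x' a (if x a = r a then r a else y a) := by
        funext j
        by_cases hj : j = a
        · subst hj; simp [Function.update_self, hx']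
        · simp [Function.update_of_ne hj, hx', Finset.mem_insert, hj]
      rw [hupd]
      by_cases hxa : x a = r a
      · rw [if_pos hxa]
        have : x' a = r a := by simp [hx', ha, hxa]
        rw [← this, Function.update_eq_self]
        exact ih x
      · rw [if_neg hxa]
        have hx'a : x' a ≠ r a := by simpa [hx', ha] using hxa
        rw [lemA a x' (y a) (hy a) hx'a]
        exact ih x
  -- representative point of a support set
  set rep : Finset (Fin N) → (∀ j, D j) := fun A j => if j ∈ A then y j else r j with hrep
  set φ : Finset (Fin N) → ℝ := fun A => F (rep A) - F r with hφ
  have hrep_empty : rep ∅ = r := by funext j; simp [hrep]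
  have hφ_empty : φ ∅ = 0 := by simp [hφ, hrep_empty]
  -- support of x
  have hsupp : ∀ x : ∀ j, D j,
      F x - F r = φ (Finset.univ.filter (fun j => x j ≠ r j)) := by
    intro x
    have h := key Finset.univ x
    have : (fun j => if j ∈ (Finset.univ : Finset (Fin N)) then
        (if x j = r j then r j else y j) else x j)
        = rep (Finset.univ.filter (fun j => x j ≠ r j)) := by
      funext j
      by_cases hj : x j = r j <;> simp [hrep, hj]
    rw [this] at h
    show F x - F r = F (rep _) - F r
    rw [h]
  refine ⟨mobiusFix φ, fun x => ?_⟩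
  set T : Finset (Fin N) := Finset.univ.filter (fun j => x j ≠ r j) with hT
  -- the product is the indicator of A ⊆ T
  have hprod : ∀ A : Finset (Fin N),
      (∏ i ∈ A, groundedIndicator (r i) (x i)) = if A ⊆ T then 1 else 0 := by
    intro A
    by_cases hAT : A ⊆ T
    · rw [if_pos hAT]
      apply Finset.prod_eq_one
      intro i hi
      have : x i ≠ r i := by
        have := hAT hi
        rw [hT, Finset.mem_filter] at this
        exact this.2
      simp [groundedIndicator, this]
    · rw [if_neg hAT]
      obtain ⟨i, hiA, hiT⟩ := Finset.not_subset.mp hAT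
      have : x i = r i := by
        by_contra hne
        exact hiT (by rw [hT, Finset.mem_filter]; exact ⟨Finset.mem_univ i, hne⟩)
      exact Finset.prod_eq_zero hiA (by simp [groundedIndicator, this])
  have hsum : (∑ A ∈ Finset.univ.filter (fun A : Finset (Fin N) => A.Nonempty),
      mobiusFix φ A * ∏ i ∈ A, groundedIndicator (r i) (x i)) = φ T := by
    have step1 : ∀ A : Finset (Fin N),
        mobiusFix φ A * ∏ i ∈ A, groundedIndicator (r i) (x i)
        = if A ⊆ T then mobiusFix φ A else 0 := by
      intro A; rw [hprod A]; split <;> ring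
    rw [Finset.sum_congr rfl (fun A _ => step1 A), ← Finset.sum_filter]
    have hset : (Finset.univ.filter (fun A : Finset (Fin N) => A.Nonempty)).filter
        (fun A => A ⊆ T) = T.powerset.erase ∅ := by
      ext A
      simp [Finset.mem_powerset, Finset.nonempty_iff_ne_empty, and_comm]
    rw [hset]
    have h0 : mobiusFix φ ∅ = 0 := by
      rw [mobiusFix, Finset.powerset_empty, Finset.erase_singleton]
      simp [hφ_empty]
    have := mobiusFix_sum φ T
    rw [← Finset.add_sum_erase _ _ (Finset.empty_mem_powerset T)] at this
    rw [h0, zero_add] at this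
    exact this
  rw [Real.log_div (hp x).ne' (hp r).ne', Real.log_div (hq x).ne' (hq r).ne']
  have := hsupp x
  rw [← hT] at this
  rw [hsum]
  simp only [hFdef] at this
  linarith
end

section
/- Let p, q : D → ℝ be strictly positive. Assume that for each i ∈ S there is a function g_i : D → ℝ depending only on the coordinates in S∖{i} such that for all x ∈ D: log( p(x) / p(g_{S∖{i}}(x)) ) = 1*_{r_i}(x_i) · g_i(x) + log( q(x) / q(g_{S∖{i}}(x)) ), and that each D_i contains an element distinct from r_i. Let (Q^m_A)_{A⊆S} and (Q^a_A)_{A⊆S} be the unique Hammersley–Clifford potential families of p and q respectively (each Q_A depending only on the coordinates in A, vanishing whenever some coordinate x_i with i ∈ A equals r_i, and summing to log(p(x)/p(r)), resp. log(q(x)/q(r))). Then for every nonempty A ⊆ S there is a real constant c_A such that Q^m_A(x) = c_A · ∏_{i∈A} 1*_{r_i}(x_i) + Q^a_A(x) for all x ∈ D; that is, each potential of the mixed-states field decomposes into a purely discrete part and the corresponding potential of the continuous field. -/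
/-- **Decomposition of mixed-states potentials.**
Let `p, q : D → ℝ` be strictly positive, with for each site `i` a function
`g i` not depending on the `i`-th coordinate such that
`log (p x / p (x[i ↦ r i])) = 1*_{r i}(x i) · g i x + log (q x / q (x[i ↦ r i]))`,
and each `D i` containing an element distinct from `r i`.
If `(Qm A)` and `(Qa A)` are the Hammersley–Clifford potential families of `p`
and `q` respectively, then for every nonempty `A ⊆ S` there is a constant
`c_A` such that `Qm A x = c_A · Π_{i ∈ A} 1*_{r i}(x i) + Qa A x` for all `x`:
each mixed-states potential decomposes into a purely discrete part and the
corresponding potential of the continuous field. -/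
theorem mixedStates_MRF_potential_decomposition
    {N : ℕ} (hN : 0 < N) (D : Fin N → Type*) [∀ i, Nonempty (D i)]
    (r : ∀ i, D i) (hr : ∀ i, ∃ y : D i, y ≠ r i)
    (p q : (∀ i, D i) → ℝ) (hp : ∀ x, 0 < p x) (hq : ∀ x, 0 < q x)
    (g : ∀ _ : Fin N, (∀ j, D j) → ℝ)
    (hg : ∀ (i : Fin N) (x : ∀ j, D j) (t : D i),
        g i (Function.update x i t) = g i x)
    (hpq : ∀ (i : Fin N) (x : ∀ j, D j),
        Real.log (p x / p (Function.update x i (r i))) =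
          groundedIndicator (r i) (x i) * g i x +
          Real.log (q x / q (Function.update x i (r i))))
    (Qm Qa : Finset (Fin N) → ((∀ j, D j) → ℝ))
    (hQm1 : ∀ (A : Finset (Fin N)) (x : ∀ j, D j),
        Qm A x = Qm A (fun i => if i ∈ A then x i else r i))
    (hQm2 : ∀ (A : Finset (Fin N)) (x : ∀ j, D j),
        (∃ i ∈ A, x i = r i) → Qm A x = 0)
    (hQm3 : ∀ x : ∀ j, D j,
        Real.log (p x / p r) = ∑ A : Finset (Fin N), Qm A x)
    (hQa1 : ∀ (A : Finset (Fin N)) (x : ∀ j, D j),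
        Qa A x = Qa A (fun i => if i ∈ A then x i else r i))
    (hQa2 : ∀ (A : Finset (Fin N)) (x : ∀ j, D j),
        (∃ i ∈ A, x i = r i) → Qa A x = 0)
    (hQa3 : ∀ x : ∀ j, D j,
        Real.log (q x / q r) = ∑ A : Finset (Fin N), Qa A x) :
    ∀ A : Finset (Fin N), A.Nonempty →
      ∃ c : ℝ, ∀ x : ∀ j, D j,
        Qm A x = c * ∏ i ∈ A, groundedIndicator (r i) (x i) + Qa A x := by
  classical
  set F : (∀ j, D j) → ℝ := fun x => Real.log (p x / p r) - Real.log (q x / q r) with hFdef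
  set R : Finset (Fin N) → (∀ j, D j) → ℝ := fun A x => Qm A x - Qa A x with hRdef
  have hR1 : ∀ (B : Finset (Fin N)) (x : ∀ j, D j),
      R B x = R B (fun i => if i ∈ B then x i else r i) := by
    intro B x
    simp only [hRdef]
    rw [← hQm1, ← hQa1]
  have hR2 : ∀ (B : Finset (Fin N)) (x : ∀ j, D j),
      (∃ i ∈ B, x i = r i) → R B x = 0 := by
    intro B x h
    simp [hRdef, hQm2 B x h, hQa2 B x h]
  have hRsum : ∀ x : ∀ j, D j, F x = ∑ B : Finset (Fin N), R B x := by
    intro x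
    simp only [hRdef, hFdef, Finset.sum_sub_distrib, ← hQm3, ← hQa3]
  have expand : ∀ y : ∀ j, D j,
      F y = (Real.log (p y) - Real.log (p r)) - (Real.log (q y) - Real.log (q r)) := by
    intro y
    simp only [hFdef, Real.log_div (hp _).ne' (hp _).ne', Real.log_div (hq _).ne' (hq _).ne']
  have hFstep : ∀ (i : Fin N) (x : ∀ j, D j),
      F x - F (Function.update x i (r i)) = groundedIndicator (r i) (x i) * g i x := by
    intro i x
    have h1 := hpq i x
    rw [Real.log_div (hp _).ne' (hp _).ne', Real.log_div (hq _).ne' (hq _).ne'] at h1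
    rw [expand, expand]
    linarith
  -- powerset formula
  have hpow : ∀ (B : Finset (Fin N)) (x : ∀ j, D j),
      F (fun i => if i ∈ B then x i else r i) = ∑ C ∈ B.powerset, R C x := by
    intro B x
    rw [hRsum]
    rw [← Finset.sum_subset (Finset.subset_univ B.powerset)]
    · apply Finset.sum_congr rfl
      intro C hC
      have hCB : C ⊆ B := Finset.mem_powerset.mp hC
      rw [hR1 C (fun i => if i ∈ B then x i else r i), hR1 C x]
      congr 1
      funext i
      by_cases hi : i ∈ C
      · simp [hi, hCB hi]
      · simp [hi]
    · intro C _ hC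
      apply hR2
      obtain ⟨i, hiC, hiB⟩ := Finset.not_subset.mp (fun h => hC (Finset.mem_powerset.mpr h))
      exact ⟨i, hiC, by simp [hiB]⟩
  -- invariance of R B under changing a non-reference coordinate in B
  have hinv : ∀ B : Finset (Fin N), ∀ (x : ∀ j, D j) (i : Fin N) (t : D i),
      i ∈ B → x i ≠ r i → t ≠ r i → R B (Function.update x i t) = R B x := by
    intro B
    induction B using Finset.strongInduction with
    | _ B ih =>
      intro x i t hiB hx ht
      have hrec : ∀ y : ∀ j, D j,
          R B y = F (fun j => if j ∈ B then y j else r j) - ∑ C ∈ B.powerset.erase B, R C y := by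
        intro y
        have h := hpow B y
        have h2 := Finset.sum_erase_add B.powerset (fun C => R C y) (Finset.mem_powerset_self B)
        rw [← h2] at h
        linarith
      rw [hrec, hrec]
      have hFeq : F (fun j => if j ∈ B then (Function.update x i t) j else r j)
          = F (fun j => if j ∈ B then x j else r j) := by
        set v : ∀ j, D j := fun j => if j ∈ B then x j else r j with hv
        have hut : (fun j => if j ∈ B then (Function.update x i t) j else r j)
            = Function.update v i t := by
          funext j
          by_cases hj : j = i
          · subst hj; simp [hiB]
          · simp [Function.update_of_ne hj, hv]
        rw [hut]
        have h1 := hFstep i (Function.update v i t)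
        have h2 := hFstep i v
        have hgi : g i (Function.update v i t) = g i v := hg i v t
        have hvv : Function.update (Function.update v i t) i (r i) = Function.update v i (r i) := by
          simp [Function.update_idem]
        rw [hvv] at h1
        have hvi : v i = x i := by simp [hv, hiB]
        have hind1 : groundedIndicator (r i) ((Function.update v i t) i) = 1 := by
          simp [groundedIndicator, ht]
        have hind2 : groundedIndicator (r i) (v i) = 1 := by
          simp [groundedIndicator, hvi, hx]
        rw [hind1, hgi] at h1
        rw [hind2] at h2
        linarith
      rw [hFeq]
      congr 1
      apply Finset.sum_congr rfl
      intro C hC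
      have hCne : C ≠ B := (Finset.mem_erase.mp hC).1
      have hCB : C ⊆ B := Finset.mem_powerset.mp (Finset.mem_erase.mp hC).2
      by_cases hiC : i ∈ C
      · exact ih C (lt_of_le_of_ne hCB hCne) x i t hiC hx ht
      · rw [hR1 C (Function.update x i t), hR1 C x]
        congr 1
        funext j
        by_cases hj : j ∈ C
        · have : j ≠ i := fun h => hiC (h ▸ hj)
          simp [hj, Function.update_of_ne this]
        · simp [hj]
  -- main argument
  intro A hA
  choose y hy using hr
  refine ⟨R A (fun j => if j ∈ A then y j else r j), fun x => ?_⟩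
  by_cases hcase : ∃ i ∈ A, x i = r i
  · obtain ⟨i, hiA, hxi⟩ := hcase
    have hprod : ∏ i ∈ A, groundedIndicator (r i) (x i) = 0 :=
      Finset.prod_eq_zero hiA (by simp [groundedIndicator, hxi])
    rw [hprod, hQm2 A x ⟨i, hiA, hxi⟩, hQa2 A x ⟨i, hiA, hxi⟩]
    ring
  · push_neg at hcase
    have hprod : ∏ i ∈ A, groundedIndicator (r i) (x i) = 1 :=
      Finset.prod_eq_one (fun i hi => by simp [groundedIndicator, hcase i hi])
    rw [hprod]
    have walk : ∀ B : Finset (Fin N), B ⊆ A →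
        R A (fun j => if j ∈ A then (if j ∈ B then y j else x j) else r j)
          = R A (fun j => if j ∈ A then x j else r j) := by
      intro B
      induction B using Finset.induction_on with
      | empty => intro _; simp
      | @insert a B ha ihB =>
        intro hsub
        have haA : a ∈ A := hsub (Finset.mem_insert_self a B)
        have hBA : B ⊆ A := (Finset.insert_subset_iff.mp hsub).2
        have hfu : (fun j => if j ∈ A then (if j ∈ insert a B then y j else x j) else r j)
            = Function.update
                (fun j => if j ∈ A then (if j ∈ B then y j else x j) else r j) a (y a) := by
          funext j
          by_cases hj : j = a
          · subst hj; simp [haA]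
          · simp only [Function.update_of_ne hj, Finset.mem_insert]
            simp [hj]
        rw [hfu, hinv A _ a (y a) haA (by simpa [haA, ha] using hcase a haA) (hy a), ihB hBA]
    have h1 : R A x = R A (fun j => if j ∈ A then x j else r j) := hR1 A x
    have h2 := walk A (subset_refl A)
    have h3 : (fun j => if j ∈ A then (if j ∈ A then y j else x j) else r j)
        = (fun j => if j ∈ A then y j else r j) := by
      funext j; by_cases hj : j ∈ A <;> simp [hj]
    rw [h3] at h2
    rw [h2, ← h1]
    simp only [hRdef]
    ring
end

section
/- Let p, q : D → ℝ be strictly positive. Assume that for each i ∈ S there is a function g_i : D → ℝ depending only on the coordinates in S∖{i} such that for all x ∈ D: log( p(x) / p(g_{S∖{i}}(x)) ) = 1*_{r_i}(x_i) · g_i(x) + log( q(x) / q(g_{S∖{i}}(x)) ), and that each D_i contains an element distinct from r_i. Let (Q^m_A) and (Q^a_A) be the unique Hammersley–Clifford potential families of p and q respectively. Then for every i ∈ S, the first-order (singleton) potentials satisfy Q^m_{{i}}(x) = g_i(r) · 1*_{r_i}(x_i) + Q^a_{{i}}(x) for all x ∈ D, where g_i(r) is the value of g_i at the fully grounded configuration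 r. -/
open scoped Classical in
lemma singleton_potential_eq {N : ℕ} {D : Fin N → Type*}
    (r : ∀ i, D i) (f : (∀ i, D i) → ℝ)
    (Q : Finset (Fin N) → ((∀ j, D j) → ℝ))
    (hQ1 : ∀ (A : Finset (Fin N)) (x : ∀ j, D j),
        Q A x = Q A (fun i => if i ∈ A then x i else r i))
    (hQ2 : ∀ (A : Finset (Fin N)) (x : ∀ j, D j),
        (∃ i ∈ A, x i = r i) → Q A x = 0)
    (hQ3 : ∀ x : ∀ j, D j,
        Real.log (f x / f r) = ∑ A : Finset (Fin N), Q A x)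
    (i : Fin N) (x : ∀ j, D j) :
    Q {i} x = Real.log (f (Function.update r i (x i)) / f r) := by
  classical
  set y : ∀ j, D j := Function.update r i (x i) with hy
  have hyi : y i = x i := Function.update_self _ _ _
  have hyj : ∀ j, j ≠ i → y j = r j := fun j hj => Function.update_of_ne hj _ _
  have hlogrr : Real.log (f r / f r) = 0 := by
    rcases eq_or_ne (f r) 0 with h | h
    · simp [h]
    · simp [div_self h]
  have hQ0 : Q ∅ r = 0 := by
    have h := hQ3 r
    rw [hlogrr, Fintype.sum_eq_single (∅ : Finset (Fin N))
      (fun A hA => hQ2 A r ⟨(Finset.nonempty_iff_ne_empty.2 hA).choose,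
        (Finset.nonempty_iff_ne_empty.2 hA).choose_spec, rfl⟩)] at h
    exact h.symm
  have hsum : ∑ A : Finset (Fin N), Q A y = Q {i} y := by
    apply Fintype.sum_eq_single
    intro A hA
    by_cases hiA : i ∈ A
    · obtain ⟨j, hj, hji⟩ : ∃ j ∈ A, j ≠ i := by
        by_contra h
        push_neg at h
        apply hA
        ext a
        simp only [Finset.mem_singleton]
        exact ⟨fun ha => h a ha, fun ha => ha ▸ hiA⟩
      exact hQ2 A y ⟨j, hj, hyj j hji⟩
    · have hground : Q A y = Q A r := by
        rw [hQ1 A y, hQ1 A r]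
        congr 1
        funext j
        by_cases hjA : j ∈ A
        · simp [hjA, hyj j (fun h => hiA (h ▸ hjA))]
        · simp [hjA]
      rcases A.eq_empty_or_nonempty with rfl | ⟨j, hj⟩
      · rw [hground, hQ0]
      · rw [hground]
        exact hQ2 A r ⟨j, hj, rfl⟩
  have hxy : Q {i} x = Q {i} y := by
    rw [hQ1 {i} x, hQ1 {i} y]
    congr 1
    funext j
    by_cases hj : j ∈ ({i} : Finset (Fin N))
    · rw [Finset.mem_singleton] at hj
      subst hj
      simp [hyi]
    · simp [hj]
  rw [hxy, hQ3 y, hsum]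

/-- **First-order (singleton) potentials of a mixed-states field.**
Under the hypotheses of the mixed-states decomposition theorem, the singleton
potentials satisfy `Qm {i} x = g i r · 1*_{r i}(x i) + Qa {i} x` for all `x`,
where `g i r` is the value of `g i` at the fully grounded configuration `r`. -/
theorem mixedStates_MRF_firstOrder_potentials
    {N : ℕ} (hN : 0 < N) (D : Fin N → Type*) [∀ i, Nonempty (D i)]
    (r : ∀ i, D i) (hr : ∀ i, ∃ y : D i, y ≠ r i)
    (p q : (∀ i, D i) → ℝ) (hp : ∀ x, 0 < p x) (hq : ∀ x, 0 < q x)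
    (g : ∀ _ : Fin N, (∀ j, D j) → ℝ)
    (hg : ∀ (i : Fin N) (x : ∀ j, D j) (t : D i),
        g i (Function.update x i t) = g i x)
    (hpq : ∀ (i : Fin N) (x : ∀ j, D j),
        Real.log (p x / p (Function.update x i (r i))) =
          groundedIndicator (r i) (x i) * g i x +
          Real.log (q x / q (Function.update x i (r i))))
    (Qm Qa : Finset (Fin N) → ((∀ j, D j) → ℝ))
    (hQm1 : ∀ (A : Finset (Fin N)) (x : ∀ j, D j),
        Qm A x = Qm A (fun i => if i ∈ A then x i else r i))
    (hQm2 : ∀ (A : Finset (Fin N)) (x : ∀ j, D j),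
        (∃ i ∈ A, x i = r i) → Qm A x = 0)
    (hQm3 : ∀ x : ∀ j, D j,
        Real.log (p x / p r) = ∑ A : Finset (Fin N), Qm A x)
    (hQa1 : ∀ (A : Finset (Fin N)) (x : ∀ j, D j),
        Qa A x = Qa A (fun i => if i ∈ A then x i else r i))
    (hQa2 : ∀ (A : Finset (Fin N)) (x : ∀ j, D j),
        (∃ i ∈ A, x i = r i) → Qa A x = 0)
    (hQa3 : ∀ x : ∀ j, D j,
        Real.log (q x / q r) = ∑ A : Finset (Fin N), Qa A x) :
    ∀ (i : Fin N) (x : ∀ j, D j),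
      Qm {i} x = g i r * groundedIndicator (r i) (x i) + Qa {i} x := by
  intro i x
  have hupd : Function.update (Function.update r i (x i)) i (r i) = r := by
    rw [Function.update_idem, Function.update_eq_self]
  have hm := singleton_potential_eq r p Qm hQm1 hQm2 hQm3 i x
  have ha := singleton_potential_eq r q Qa hQa1 hQa2 hQa3 i x
  have hkey := hpq i (Function.update r i (x i))
  rw [hupd, Function.update_self, hg i r (x i)] at hkey
  rw [hm, ha, hkey, mul_comm]
end

section
/- Fix a site l ∈ S. Then the one-site normalization of p with respect to the mixed measure m_l satisfies ∫ p(x[l↦t]) dm_l(t) = p(x[l↦r_l]) · ( 1 + e^{h_l(x)} · c_l(x) / q(x[l↦r_l]) ) = p(x[l↦r_l]) / ρ_l(x), for every x ∈ D. -/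
open MeasureTheory

lemma integrable_dirac_of_measurable {α : Type*} [MeasurableSpace α] {f : α → ℝ}
    (hf : Measurable f) (a : α) : Integrable f (Measure.dirac a) := by
  refine ⟨hf.aestronglyMeasurable, ?_⟩
  rw [HasFiniteIntegral, lintegral_dirac' a (by measurability)]
  exact ENNReal.coe_lt_top

/-- **One-site normalization w.r.t. the mixed measure `m_l = δ_{r_l} + λ_l`.**
With `D = Π_{i∈S} ℝ^{n_i}`, `q : D → (0,∞)` measurable, `h_l` measurable and
independent of the `l`-th block, and `p : D → (0,∞)` satisfying
`p x = p (x[l↦r_l]) · exp(1*_{r_l}(x_l)·h_l x) · q x / q (x[l↦r_l])`,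
with `c_l x = ∫ q(x[l↦t]) dλ_l(t)` finite and positive, one has for all `x`:
`∫ p(x[l↦t]) dm_l(t) = p(x[l↦r_l]) · (1 + e^{h_l x} · c_l x / q(x[l↦r_l]))
 = p(x[l↦r_l]) / ρ_l x`,
where `ρ_l x = 1 / (1 + e^{h_l x} · c_l x / q(x[l↦r_l]))`. -/
theorem mixedStates_oneSite_normalization
    {N : ℕ} (hN : 0 < N) (n : Fin N → ℕ) (hn : ∀ i, 0 < n i)
    (r : ∀ i, Fin (n i) → ℝ) (l : Fin N)
    (q : (∀ i, Fin (n i) → ℝ) → ℝ) (hqmeas : Measurable q)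
    (hqpos : ∀ x, 0 < q x)
    (h : (∀ i, Fin (n i) → ℝ) → ℝ) (hhmeas : Measurable h)
    (hhl : ∀ (x : ∀ i, Fin (n i) → ℝ) (t : Fin (n l) → ℝ),
        h (Function.update x l t) = h x)
    (p : (∀ i, Fin (n i) → ℝ) → ℝ) (hpmeas : Measurable p)
    (hppos : ∀ x, 0 < p x)
    (hpq : ∀ x : ∀ i, Fin (n i) → ℝ,
        p x = p (Function.update x l (r l)) *
          Real.exp (groundedIndicator (r l) (x l) * h x) *
          q x / q (Function.update x l (r l)))
    (hqint : ∀ x : ∀ i, Fin (n i) → ℝ,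
        Integrable (fun t : Fin (n l) → ℝ => q (Function.update x l t)))
    (hcpos : ∀ x : ∀ i, Fin (n i) → ℝ,
        0 < ∫ t : Fin (n l) → ℝ, q (Function.update x l t))
    (ρ : (∀ i, Fin (n i) → ℝ) → ℝ)
    (hρ : ∀ x : ∀ i, Fin (n i) → ℝ,
        ρ x = 1 / (1 + Real.exp (h x) *
          (∫ t : Fin (n l) → ℝ, q (Function.update x l t)) /
          q (Function.update x l (r l)))) :
    ∀ x : ∀ i, Fin (n i) → ℝ,
      (∫ t : Fin (n l) → ℝ, p (Function.update x l t)
          ∂(Measure.dirac (r l) + volume)) =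
        p (Function.update x l (r l)) *
          (1 + Real.exp (h x) *
            (∫ t : Fin (n l) → ℝ, q (Function.update x l t)) /
            q (Function.update x l (r l))) ∧
      (∫ t : Fin (n l) → ℝ, p (Function.update x l t)
          ∂(Measure.dirac (r l) + volume)) =
        p (Function.update x l (r l)) / ρ x := by
  intro x
  haveI : NullSingletonClass (volume : Measure (Fin (n l) → ℝ)) := by
    haveI : Nonempty (Fin (n l)) := Fin.pos_iff_nonempty.mp (hn l)
    infer_instance
  set xr := Function.update x l (r l) with hxr
  set c := ∫ t : Fin (n l) → ℝ, q (Function.update x l t) with hc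
  set C := p xr * Real.exp (h x) / q xr with hC
  have hupd : Measurable (fun t : Fin (n l) → ℝ => Function.update x l t) :=
    measurable_update x
  have hfmeas : Measurable (fun t : Fin (n l) → ℝ => p (Function.update x l t)) :=
    hpmeas.comp hupd
  have key : ∀ t : Fin (n l) → ℝ, t ≠ r l →
      p (Function.update x l t) = C * q (Function.update x l t) := by
    intro t ht
    have := hpq (Function.update x l t)
    rw [Function.update_idem, hhl, Function.update_self] at this
    rw [this, groundedIndicator, if_neg ht, one_mul, hC]
    ring
  have hne : ∀ᵐ t : (Fin (n l) → ℝ) ∂volume, t ≠ r l := by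
    rw [ae_iff]
    have : {t : Fin (n l) → ℝ | ¬ t ≠ r l} = {r l} := by ext t; simp
    rw [this]
    exact measure_singleton _
  have hae : (fun t : Fin (n l) → ℝ => p (Function.update x l t))
      =ᵐ[volume] fun t => C * q (Function.update x l t) := by
    filter_upwards [hne] with t ht
    exact key t ht
  have hint_vol : Integrable (fun t : Fin (n l) → ℝ => p (Function.update x l t)) volume := by
    refine (Integrable.congr ?_ hae.symm)
    exact (hqint x).const_mul C
  have hint_dirac : Integrable (fun t : Fin (n l) → ℝ => p (Function.update x l t))
      (Measure.dirac (r l)) := integrable_dirac_of_measurable hfmeas (r l)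
  have hsplit : (∫ t : Fin (n l) → ℝ, p (Function.update x l t)
      ∂(Measure.dirac (r l) + volume)) = p xr + C * c := by
    rw [integral_add_measure hint_dirac hint_vol, integral_dirac,
      integral_congr_ae hae, integral_const_mul]
  have hqr : q xr ≠ 0 := (hqpos xr).ne'
  have hmain : (∫ t : Fin (n l) → ℝ, p (Function.update x l t)
      ∂(Measure.dirac (r l) + volume)) = p xr * (1 + Real.exp (h x) * c / q xr) := by
    rw [hsplit, hC]; field_simp
  refine ⟨hmain, ?_⟩
  rw [hmain, hρ x, one_div, div_inv_eq_mul]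
end

section
/- Fix a site l ∈ S. Then the one-site conditional mixed-states density of p has the mixed form: for every x ∈ D, p(x) / ( ∫ p(x[l↦t]) dm_l(t) ) = ρ_l(x) · 1_{r_l}(x_l) + (1 − ρ_l(x)) · 1*_{r_l}(x_l) · q(x) / c_l(x); that is, the conditional law of the l-th coordinate given the others is a mixture placing mass ρ_l(x) at the point r_l and, with weight 1 − ρ_l(x), the absolutely continuous conditional density q(x)/c_l(x) of q. -/
open MeasureTheory

/-- **Mixed form of the one-site conditional density.**
With `D = Π_{i∈S} ℝ^{n_i}`, `m_l = δ_{r_l} + λ_l`, `q : D → (0,∞)` measurable,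
`h_l` measurable and independent of the `l`-th block, and `p : D → (0,∞)`
satisfying `p x = p (x[l↦r_l]) · exp(1*_{r_l}(x_l)·h_l x) · q x / q (x[l↦r_l])`,
with `c_l x = ∫ q(x[l↦t]) dλ_l(t)` finite and positive, and
`ρ_l x = 1 / (1 + e^{h_l x} · c_l x / q(x[l↦r_l]))`, one has for all `x`:
`p x / ∫ p(x[l↦t]) dm_l(t)
 = ρ_l x · 1_{r_l}(x_l) + (1 − ρ_l x) · 1*_{r_l}(x_l) · q x / c_l x`,
i.e. the conditional law of the `l`-th coordinate given the others is a
mixture of a point mass at `r_l` (with weight `ρ_l x`) and the absolutely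
continuous conditional density `q x / c_l x` (with weight `1 − ρ_l x`). -/
theorem mixedStates_oneSite_conditional_mixedForm
    {N : ℕ} (hN : 0 < N) (n : Fin N → ℕ) (hn : ∀ i, 0 < n i)
    (r : ∀ i, Fin (n i) → ℝ) (l : Fin N)
    (q : (∀ i, Fin (n i) → ℝ) → ℝ) (hqmeas : Measurable q)
    (hqpos : ∀ x, 0 < q x)
    (h : (∀ i, Fin (n i) → ℝ) → ℝ) (hhmeas : Measurable h)
    (hhl : ∀ (x : ∀ i, Fin (n i) → ℝ) (t : Fin (n l) → ℝ),
        h (Function.update x l t) = h x)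
    (p : (∀ i, Fin (n i) → ℝ) → ℝ) (hpmeas : Measurable p)
    (hppos : ∀ x, 0 < p x)
    (hpq : ∀ x : ∀ i, Fin (n i) → ℝ,
        p x = p (Function.update x l (r l)) *
          Real.exp (groundedIndicator (r l) (x l) * h x) *
          q x / q (Function.update x l (r l)))
    (hqint : ∀ x : ∀ i, Fin (n i) → ℝ,
        Integrable (fun t : Fin (n l) → ℝ => q (Function.update x l t)))
    (hcpos : ∀ x : ∀ i, Fin (n i) → ℝ,
        0 < ∫ t : Fin (n l) → ℝ, q (Function.update x l t))
    (ρ : (∀ i, Fin (n i) → ℝ) → ℝ)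
    (hρ : ∀ x : ∀ i, Fin (n i) → ℝ,
        ρ x = 1 / (1 + Real.exp (h x) *
          (∫ t : Fin (n l) → ℝ, q (Function.update x l t)) /
          q (Function.update x l (r l)))) :
    ∀ x : ∀ i, Fin (n i) → ℝ,
      p x / (∫ t : Fin (n l) → ℝ, p (Function.update x l t)
          ∂(Measure.dirac (r l) + volume)) =
        ρ x * (1 - groundedIndicator (r l) (x l)) +
        (1 - ρ x) * groundedIndicator (r l) (x l) *
          (q x / ∫ t : Fin (n l) → ℝ, q (Function.update x l t)) := by

  intro x
  haveI : Nonempty (Fin (n l)) := ⟨⟨0, hn l⟩⟩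
  set xb := Function.update x l (r l) with hxb
  set c := ∫ t : Fin (n l) → ℝ, q (Function.update x l t) with hcdef
  have hupd : ∀ t : Fin (n l) → ℝ,
      Function.update (Function.update x l t) l (r l) = xb := by
    intro t; rw [Function.update_idem]
  have hmeasup : Measurable (fun t : Fin (n l) → ℝ => Function.update x l t) :=
    measurable_update x
  have hpform : ∀ t : Fin (n l) → ℝ, p (Function.update x l t) =
      p xb * Real.exp (groundedIndicator (r l) t * h x) *
        q (Function.update x l t) / q xb := by
    intro t
    have := hpq (Function.update x l t)
    rwa [hupd t, hhl, Function.update_self] at this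
  have hqb : 0 < q xb := hqpos xb
  have hpb : 0 < p xb := hppos xb
  have hc : 0 < c := hcpos x
  have hA : 0 < Real.exp (h x) := Real.exp_pos _
  -- integrability
  have hintvol : Integrable (fun t : Fin (n l) → ℝ => p (Function.update x l t)) volume := by
    have hg : Integrable (fun t : Fin (n l) → ℝ =>
        p xb * Real.exp (h x) / q xb * q (Function.update x l t)) volume :=
      (hqint x).const_mul _
    refine hg.congr ?_
    have hsing : volume ({r l} : Set (Fin (n l) → ℝ)) = 0 := measure_singleton _
    refine (MeasureTheory.ae_iff.mpr ?_)
    refine measure_mono_null (fun t ht => ?_) hsing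
    simp only [Set.mem_setOf_eq] at ht
    by_contra htne
    apply ht
    have htne' : t ≠ r l := by simpa using htne
    have : groundedIndicator (r l) t = 1 := by
      simp [groundedIndicator, htne']
    rw [hpform t, this]
    ring
  have hintdirac : Integrable (fun t : Fin (n l) → ℝ => p (Function.update x l t))
      (Measure.dirac (r l)) := by
    refine ⟨(hpmeas.comp hmeasup).aestronglyMeasurable, ?_⟩
    unfold HasFiniteIntegral
    rw [MeasureTheory.lintegral_dirac]
    exact ENNReal.coe_lt_top
  -- compute the integral
  have hIvol : (∫ t : Fin (n l) → ℝ, p (Function.update x l t)) =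
      p xb * Real.exp (h x) * c / q xb := by
    have hsing : volume ({r l} : Set (Fin (n l) → ℝ)) = 0 := measure_singleton _
    have hae : (fun t : Fin (n l) → ℝ => p (Function.update x l t)) =ᵐ[volume]
        (fun t : Fin (n l) → ℝ =>
          p xb * Real.exp (h x) / q xb * q (Function.update x l t)) := by
      refine (MeasureTheory.ae_iff.mpr ?_)
      refine measure_mono_null (fun t ht => ?_) hsing
      simp only [Set.mem_setOf_eq] at ht
      by_contra htne
      apply ht
      have htne' : t ≠ r l := by simpa using htne
      have : groundedIndicator (r l) t = 1 := by simp [groundedIndicator, htne']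
      rw [hpform t, this]
      ring
    rw [integral_congr_ae hae, integral_const_mul, ← hcdef]
    ring
  have hIdirac : (∫ t : Fin (n l) → ℝ, p (Function.update x l t)
      ∂(Measure.dirac (r l))) = p xb := by
    rw [integral_dirac]
  have hI : (∫ t : Fin (n l) → ℝ, p (Function.update x l t)
      ∂(Measure.dirac (r l) + volume)) =
      p xb * (1 + Real.exp (h x) * c / q xb) := by
    rw [integral_add_measure hintdirac hintvol, hIdirac, hIvol]
    field_simp
  have hden : 0 < 1 + Real.exp (h x) * c / q xb := by positivity
  rw [hI, hρ x, ← hcdef, ← hxb]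
  by_cases hx : x l = r l
  · have hgi : groundedIndicator (r l) (x l) = 0 := by simp [groundedIndicator, hx]
    have hxbx : xb = x := by rw [hxb, ← hx, Function.update_eq_self]
    rw [hgi, hxbx]
    have hpx : 0 < p x := hppos x
    have hqx : 0 < q x := hqpos x
    have hd : 0 < 1 + Real.exp (h x) * c / q x := by positivity
    field_simp
    ring
  · have hgi : groundedIndicator (r l) (x l) = 1 := by simp [groundedIndicator, hx]
    have hpx : p x = p xb * Real.exp (h x) * q x / q xb := by
      have := hpq x
      rwa [hgi, one_mul, ← hxb] at this
    rw [hgi, hpx]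
    have hqx : 0 < q x := hqpos x
    field_simp
    ring
end
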